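/- Fix d ∈ ℕ and R > 0, and let f : ℝ^d → ℂ be a smooth function such that for every r with 0 < r < R and every k ∈ ℕ there exists C > 0 with ‖iteratedFDeriv ℝ k f v‖ ≤ C · exp(−r·‖v‖) for all v ∈ ℝ^d. Then: (a) for every λ ∈ ℂ^d with ‖Re λ‖ < R the function v ↦ f(v)·exp(⟨λ, v⟩) is integrable on ℝ^d, so F(λ) := ∫_{ℝ^d} f(v)·exp(⟨λ, v⟩) dv is defined; (b) F is holomorphic (complex Fréchet differentiable) on the open tube {λ ∈ ℂ^d : ‖Re λ‖ < R}; and (c) for every r with 0 < r < R and every N ∈ ℕ, sup { |F(λ)|·(1 + ‖λ‖)^N : λ ∈ ℂ^d, ‖Re λ‖ ≤ r } < ∞. -/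

import Mathlib

open MeasureTheory

/-- The componentwise real part of a vector in `ℂ^d`, as a vector of `ℝ^d`. -/
noncomputable def reVec (d : ℕ) (lam : EuclideanSpace ℂ (Fin d)) :
    EuclideanSpace ℝ (Fin d) :=
  (EuclideanSpace.equiv (Fin d) ℝ).symm fun i => (lam i).re

variable {d : ℕ}

lemma reVec_apply (lam : EuclideanSpace ℂ (Fin d)) (i : Fin d) :
    reVec d lam i = (lam i).re := rfl

lemma norm_reVec_le (lam : EuclideanSpace ℂ (Fin d)) : ‖reVec d lam‖ ≤ ‖lam‖ := by
  rw [EuclideanSpace.norm_eq, EuclideanSpace.norm_eq]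
  apply Real.sqrt_le_sqrt
  apply Finset.sum_le_sum
  intro i _
  have := Complex.abs_re_le_norm (lam i)
  have h2 : ‖reVec d lam i‖ ≤ ‖lam i‖ := by
    simpa [reVec_apply, Real.norm_eq_abs] using this
  exact pow_le_pow_left₀ (norm_nonneg _) h2 2

lemma reVec_sub (a b : EuclideanSpace ℂ (Fin d)) :
    reVec d (a - b) = reVec d a - reVec d b := by
  ext i
  simp [reVec_apply]

lemma norm_le_sum_norm (lam : EuclideanSpace ℂ (Fin d)) : ‖lam‖ ≤ ∑ i, ‖lam i‖ := by
  rw [EuclideanSpace.norm_eq]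
  rw [show ∑ i, ‖lam i‖ = Real.sqrt ((∑ i, ‖lam i‖)^2) by
    rw [Real.sqrt_sq (Finset.sum_nonneg fun i _ => norm_nonneg _)]]
  apply Real.sqrt_le_sqrt
  exact Finset.sum_sq_le_sq_sum_of_nonneg (fun i _ => norm_nonneg _)

lemma re_phase (lam : EuclideanSpace ℂ (Fin d)) (v : EuclideanSpace ℝ (Fin d)) :
    (∑ i, lam i * (v i : ℂ)).re = ∑ i, (lam i).re * v i := by
  rw [Complex.re_sum]
  congr 1; ext i
  simp [Complex.mul_re]

lemma norm_exp_phase (lam : EuclideanSpace ℂ (Fin d)) (v : EuclideanSpace ℝ (Fin d)) :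
    ‖Complex.exp (∑ i, lam i * (v i : ℂ))‖ ≤ Real.exp (‖reVec d lam‖ * ‖v‖) := by
  rw [show ‖Complex.exp (∑ i, lam i * (v i : ℂ))‖ = Real.exp ((∑ i, lam i * ((v i : ℝ) : ℂ)).re) from Complex.norm_exp _, re_phase]
  apply Real.exp_le_exp.2
  have : ∑ i, (lam i).re * v i = inner ℝ (reVec d lam) v := by
    rw [PiLp.inner_apply]
    exact Finset.sum_congr rfl fun i _ => by simp [reVec_apply, mul_comm]
  rw [this]
  exact real_inner_le_norm _ _

lemma poly_exp_bound (m : ℕ) {δ : ℝ} (hδ : 0 < δ) :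
    ∃ C > 0, ∀ t : ℝ, 0 ≤ t → (1 + t) ^ m * Real.exp (-δ * t) ≤ C := by
  rcases Nat.eq_zero_or_pos m with hm | hm
  · refine ⟨1, one_pos, fun t ht => ?_⟩
    have : Real.exp (-δ * t) ≤ 1 := Real.exp_le_one_iff.2 (by nlinarith)
    simpa [hm] using this
  refine ⟨(1 + m / δ) ^ m, by positivity, fun t ht => ?_⟩
  have hm' : (0:ℝ) < m := by exact_mod_cast hm
  have key : 1 + t ≤ (1 + m / δ) * Real.exp (δ * t / m) := by
    have h1 : 1 + δ * t / m ≤ Real.exp (δ * t / m) := by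
      simpa [add_comm] using Real.add_one_le_exp (δ * t / m)
    have h3 : (1 + (m:ℝ) / δ) * (1 + δ * t / m) ≥ 1 + t := by
      have : (1 + (m:ℝ) / δ) * (1 + δ * t / m) = 1 + t + m / δ + δ * t / m := by
        field_simp; ring
      rw [this]
      have : 0 ≤ δ * t / m := by positivity
      have : 0 ≤ (m:ℝ) / δ := by positivity
      linarith
    calc 1 + t ≤ (1 + (m:ℝ)/δ) * (1 + δ * t / m) := h3
      _ ≤ (1 + m / δ) * Real.exp (δ * t / m) := by
          apply mul_le_mul_of_nonneg_left h1 (by positivity)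
  have hpow : (1 + t) ^ m ≤ ((1 + m / δ) * Real.exp (δ * t / m)) ^ m :=
    pow_le_pow_left₀ (by linarith) key m
  have hrw : ((1 + m / δ) * Real.exp (δ * t / m)) ^ m = (1 + m / δ) ^ m * Real.exp (δ * t) := by
    rw [mul_pow, ← Real.exp_nat_mul]
    congr 1
    field_simp
  calc (1 + t) ^ m * Real.exp (-δ * t) ≤ (1 + m / δ) ^ m * Real.exp (δ * t) * Real.exp (-δ * t) := by
        apply mul_le_mul_of_nonneg_right (hrw ▸ hpow) (Real.exp_nonneg _)
    _ = (1 + m / δ) ^ m := by rw [mul_assoc, ← Real.exp_add]; simp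


lemma integrable_exp_decay {δ : ℝ} (hδ : 0 < δ) :
    Integrable (fun v : EuclideanSpace ℝ (Fin d) => Real.exp (-δ * ‖v‖)) := by
  obtain ⟨C, hC, hCb⟩ := poly_exp_bound (d + 1) hδ
  have hd : (Module.finrank ℝ (EuclideanSpace ℝ (Fin d)) : ℝ) < (d + 1 : ℕ) := by
    simp [finrank_euclideanSpace_fin]
  have hint : Integrable (fun v : EuclideanSpace ℝ (Fin d) => C * (1 + ‖v‖) ^ (-((d:ℝ) + 1))) :=
    (integrable_one_add_norm (by exact_mod_cast hd)).const_mul C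
  refine hint.mono' ?_ ?_
  · exact (Real.continuous_exp.comp (continuous_const.mul continuous_norm)).aestronglyMeasurable
  · filter_upwards with v
    rw [Real.norm_eq_abs, abs_of_pos (Real.exp_pos _)]
    have h1 : (0:ℝ) < 1 + ‖v‖ := by positivity
    have h2 : (1 + ‖v‖) ^ (-((d:ℝ) + 1)) = ((1 + ‖v‖) ^ ((d:ℕ) + 1 : ℕ))⁻¹ := by
      rw [← Real.rpow_neg_one ((1 + ‖v‖) ^ ((d:ℕ) + 1 : ℕ)), ← Real.rpow_natCast (1 + ‖v‖) (d+1),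
        ← Real.rpow_mul h1.le]
      norm_num
    rw [h2, mul_comm C, inv_mul_eq_div, le_div_iff₀ (by positivity)]
    calc Real.exp (-δ * ‖v‖) * (1 + ‖v‖) ^ (d + 1) = (1 + ‖v‖) ^ (d + 1) * Real.exp (-δ * ‖v‖) := by ring
      _ ≤ C := hCb _ (norm_nonneg v)

lemma integrable_of_exp_decay {g : EuclideanSpace ℝ (Fin d) → ℂ}
    (hg : AEStronglyMeasurable g (volume : Measure (EuclideanSpace ℝ (Fin d))))
    {C δ : ℝ} (hδ : 0 < δ) (h : ∀ v, ‖g v‖ ≤ C * Real.exp (-δ * ‖v‖)) :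
    Integrable g := by
  refine ((integrable_exp_decay hδ).const_mul C).mono' hg ?_
  filter_upwards with v
  exact h v

def Decay (d : ℕ) (R : ℝ) (g : EuclideanSpace ℝ (Fin d) → ℂ) : Prop :=
  ContDiff ℝ (⊤ : ℕ∞) g ∧ ∀ r : ℝ, 0 < r → r < R → ∀ k : ℕ, ∃ C > 0,
    ∀ v : EuclideanSpace ℝ (Fin d), ‖iteratedFDeriv ℝ k g v‖ ≤ C * Real.exp (-r * ‖v‖)

lemma Decay.norm_le {R : ℝ} {g : EuclideanSpace ℝ (Fin d) → ℂ} (hg : Decay d R g)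
    {r : ℝ} (hr : 0 < r) (hrR : r < R) :
    ∃ C > 0, ∀ v, ‖g v‖ ≤ C * Real.exp (-r * ‖v‖) := by
  obtain ⟨C, hC, hCb⟩ := hg.2 r hr hrR 0
  exact ⟨C, hC, fun v => by simpa [norm_iteratedFDeriv_zero] using hCb v⟩

lemma Decay.norm_fderiv_le {R : ℝ} {g : EuclideanSpace ℝ (Fin d) → ℂ} (hg : Decay d R g)
    {r : ℝ} (hr : 0 < r) (hrR : r < R) :
    ∃ C > 0, ∀ v, ‖fderiv ℝ g v‖ ≤ C * Real.exp (-r * ‖v‖) := by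
  obtain ⟨C, hC, hCb⟩ := hg.2 r hr hrR 1
  refine ⟨C, hC, fun v => ?_⟩
  have : ‖fderiv ℝ g v‖ = ‖iteratedFDeriv ℝ 1 g v‖ := by
    rw [← norm_iteratedFDeriv_fderiv, norm_iteratedFDeriv_zero]
  rw [this]; exact hCb v

lemma continuous_cexp_phase (lam : EuclideanSpace ℂ (Fin d)) :
    Continuous (fun v : EuclideanSpace ℝ (Fin d) => Complex.exp (∑ i, lam i * (v i : ℂ))) := by
  apply Complex.continuous_exp.comp
  apply continuous_finset_sum
  intro i _
  exact continuous_const.mul (Complex.continuous_ofReal.comp (EuclideanSpace.proj (𝕜 := ℝ) i).continuous)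

lemma integrand_bound {R : ℝ} {g : EuclideanSpace ℝ (Fin d) → ℂ} (hg : Decay d R g) (hR : 0 < R)
    {r : ℝ} (hr : 0 ≤ r) (hrR : r < R) :
    ∃ C > 0, ∀ lam : EuclideanSpace ℂ (Fin d), ‖reVec d lam‖ ≤ r →
      ∀ v, ‖g v * Complex.exp (∑ i, lam i * (v i : ℂ))‖ ≤
        C * Real.exp (-((R - r)/2) * ‖v‖) := by
  set r' : ℝ := (r + R) / 2 with hr'
  obtain ⟨C, hC, hCb⟩ := hg.norm_le (r := r') (by positivity) (by simp only [hr']; linarith)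
  refine ⟨C, hC, fun lam hlam v => ?_⟩
  rw [norm_mul]
  calc ‖g v‖ * ‖Complex.exp (∑ i, lam i * (v i : ℂ))‖
      ≤ (C * Real.exp (-r' * ‖v‖)) * Real.exp (‖reVec d lam‖ * ‖v‖) := by
        apply mul_le_mul (hCb v) (norm_exp_phase lam v) (norm_nonneg _) (by positivity)
    _ ≤ (C * Real.exp (-r' * ‖v‖)) * Real.exp (r * ‖v‖) := by
        apply mul_le_mul_of_nonneg_left _ (by positivity)
        exact Real.exp_le_exp.2 (mul_le_mul_of_nonneg_right hlam (norm_nonneg v))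
    _ = C * Real.exp (-((R - r)/2) * ‖v‖) := by
        rw [mul_assoc, ← Real.exp_add]
        congr 2
        rw [hr']; ring

lemma integrable_integrand {R : ℝ} {g : EuclideanSpace ℝ (Fin d) → ℂ} (hg : Decay d R g)
    (hR : 0 < R) {lam : EuclideanSpace ℂ (Fin d)} (hlam : ‖reVec d lam‖ < R) :
    Integrable (fun v : EuclideanSpace ℝ (Fin d) =>
      g v * Complex.exp (∑ i, lam i * (v i : ℂ))) := by
  obtain ⟨C, hC, hCb⟩ := integrand_bound hg hR (norm_nonneg (reVec d lam)) hlam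
  exact integrable_of_exp_decay
    ((hg.1.continuous.mul (continuous_cexp_phase lam)).aestronglyMeasurable)
    (by linarith : (0:ℝ) < (R - ‖reVec d lam‖)/2) (hCb lam le_rfl)

open Metric in
lemma integral_dir_deriv_eq_zero {h : EuclideanSpace ℝ (Fin d) → ℂ}
    (hdiff : Differentiable ℝ h) (hcont : Continuous (fderiv ℝ h))
    (w : EuclideanSpace ℝ (Fin d)) {C δ : ℝ} (hδ : 0 < δ)
    (hb : ∀ v, ‖h v‖ ≤ C * Real.exp (-δ * ‖v‖))
    (hb' : ∀ v, ‖fderiv ℝ h v‖ ≤ C * Real.exp (-δ * ‖v‖)) :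
    ∫ v, fderiv ℝ h v w = 0 := by
  have hCnn : 0 ≤ C := le_trans (norm_nonneg _) ((hb 0).trans_eq (by simp))
  -- the parametrized family
  set F : ℝ → EuclideanSpace ℝ (Fin d) → ℂ := fun t v => h (v + t • w) with hF
  set F' : ℝ → EuclideanSpace ℝ (Fin d) → ℂ := fun t v => fderiv ℝ h (v + t • w) w with hF'
  have hmeas : ∀ t : ℝ, AEStronglyMeasurable (F t) volume := by
    intro t
    exact ((hdiff.continuous).comp (continuous_id.add continuous_const)).aestronglyMeasurable
  have hint : Integrable (F 0) := by
    refine integrable_of_exp_decay (hmeas 0) hδ (C := C) fun v => ?_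
    show ‖h (v + (0:ℝ) • w)‖ ≤ _
    rw [show v + (0:ℝ) • w = v by simp]
    exact hb v
  have h'meas : AEStronglyMeasurable (F' 0) volume := by
    apply Continuous.aestronglyMeasurable
    exact ((ContinuousLinearMap.apply ℝ ℂ w).continuous.comp
      (hcont.comp (continuous_id.add continuous_const)))
  have key : ∀ (t : ℝ) (v : EuclideanSpace ℝ (Fin d)),
      HasDerivAt (fun s => F s v) (F' t v) t := by
    intro t v
    have hγ : HasDerivAt (fun s : ℝ => v + s • w) w t := by
      simpa using ((hasDerivAt_id t).smul_const w).const_add v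
    exact (hdiff (v + t • w)).hasFDerivAt.comp_hasDerivAt t hγ
  have hbound : ∀ᵐ v : EuclideanSpace ℝ (Fin d), ∀ t ∈ ball (0:ℝ) 1,
      ‖F' t v‖ ≤ (C * ‖w‖ * Real.exp (δ * ‖w‖)) * Real.exp (-δ * ‖v‖) := by
    filter_upwards with v
    intro t ht
    have h1 : ‖F' t v‖ ≤ ‖fderiv ℝ h (v + t • w)‖ * ‖w‖ :=
      ContinuousLinearMap.le_opNorm _ _
    have h2 : ‖v‖ - ‖w‖ ≤ ‖v + t • w‖ := by
      have : ‖t • w‖ ≤ ‖w‖ := by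
        rw [norm_smul]
        have ht1 : |t| ≤ 1 := by
          have := mem_ball_iff_norm.1 ht
          rw [sub_zero, Real.norm_eq_abs] at this
          linarith
        calc ‖t‖ * ‖w‖ ≤ 1 * ‖w‖ := by
              apply mul_le_mul_of_nonneg_right _ (norm_nonneg w)
              simpa [Real.norm_eq_abs] using ht1
          _ = ‖w‖ := one_mul _
      calc ‖v‖ - ‖w‖ ≤ ‖v‖ - ‖t • w‖ := by linarith
        _ ≤ ‖v + t • w‖ := by
            have h3 := norm_sub_norm_le v (-(t • w))
            have h4 : v - -(t • w) = v + t • w := by abel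
            rw [h4, norm_neg] at h3
            linarith
    calc ‖F' t v‖ ≤ ‖fderiv ℝ h (v + t • w)‖ * ‖w‖ := h1
      _ ≤ (C * Real.exp (-δ * ‖v + t • w‖)) * ‖w‖ := by
          apply mul_le_mul_of_nonneg_right (hb' _) (norm_nonneg w)
      _ ≤ (C * Real.exp (-δ * (‖v‖ - ‖w‖))) * ‖w‖ := by
          apply mul_le_mul_of_nonneg_right _ (norm_nonneg w)
          apply mul_le_mul_of_nonneg_left _ hCnn
          apply Real.exp_le_exp.2
          nlinarith
      _ = (C * ‖w‖ * Real.exp (δ * ‖w‖)) * Real.exp (-δ * ‖v‖) := by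
          rw [show -δ * (‖v‖ - ‖w‖) = δ * ‖w‖ + -δ * ‖v‖ by ring, Real.exp_add]
          ring
  have hbint : Integrable (fun v : EuclideanSpace ℝ (Fin d) =>
      (C * ‖w‖ * Real.exp (δ * ‖w‖)) * Real.exp (-δ * ‖v‖)) :=
    (integrable_exp_decay hδ).const_mul _
  have := hasDerivAt_integral_of_dominated_loc_of_deriv_le (μ := volume)
    (F := F) (F' := F') (x₀ := (0:ℝ)) (ball_mem_nhds _ one_pos)
    (Filter.Eventually.of_forall hmeas) hint h'meas hbound hbint
    (Filter.Eventually.of_forall fun v => fun t _ => key t v)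
  obtain ⟨-, hder⟩ := this
  have hconst : (fun t : ℝ => ∫ v, F t v) = fun _ => ∫ v, h v := by
    funext t
    simpa using integral_add_right_eq_self h (t • w)
  have h0 : HasDerivAt (fun t : ℝ => ∫ v, F t v) 0 0 := by
    rw [hconst]; exact hasDerivAt_const _ _
  have : (∫ v, F' 0 v) = 0 := hder.unique h0
  rw [← this]
  congr 1
  funext v
  simp [hF']

lemma coord_le_norm (v : EuclideanSpace ℝ (Fin d)) (i : Fin d) : |v i| ≤ ‖v‖ := by
  rw [EuclideanSpace.norm_eq]
  rw [show |v i| = Real.sqrt (‖v i‖^2) by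
    rw [Real.sqrt_sq_eq_abs, Real.norm_eq_abs, abs_abs]]
  apply Real.sqrt_le_sqrt
  exact Finset.single_le_sum (f := fun j => ‖v j‖^2) (fun j _ => by positivity) (Finset.mem_univ i)

lemma coord_le_norm' (lam : EuclideanSpace ℂ (Fin d)) (i : Fin d) : ‖lam i‖ ≤ ‖lam‖ := by
  rw [EuclideanSpace.norm_eq]
  rw [show ‖lam i‖ = Real.sqrt (‖lam i‖^2) by rw [Real.sqrt_sq (norm_nonneg _)]]
  apply Real.sqrt_le_sqrt
  exact Finset.single_le_sum (f := fun j => ‖lam j‖^2) (fun j _ => by positivity) (Finset.mem_univ i)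

/-- The phase `v ↦ ∑ i, lam i * v i` as a continuous `ℝ`-linear map. -/
noncomputable def Mlam (d : ℕ) (lam : EuclideanSpace ℂ (Fin d)) :
    EuclideanSpace ℝ (Fin d) →L[ℝ] ℂ :=
  ∑ i, lam i • ((Complex.ofRealCLM).comp (EuclideanSpace.proj (𝕜 := ℝ) i))

lemma Mlam_apply (lam : EuclideanSpace ℂ (Fin d)) (v : EuclideanSpace ℝ (Fin d)) :
    Mlam d lam v = ∑ i, lam i * (v i : ℂ) := by
  simp [Mlam]

lemma norm_Mlam_le (lam : EuclideanSpace ℂ (Fin d)) : ‖Mlam d lam‖ ≤ ∑ i, ‖lam i‖ := by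
  refine (norm_sum_le _ _).trans ?_
  apply Finset.sum_le_sum
  intro i _
  refine (norm_smul_le (lam i) ((Complex.ofRealCLM).comp (EuclideanSpace.proj (𝕜 := ℝ) i))).trans ?_
  calc ‖lam i‖ * ‖(Complex.ofRealCLM).comp (EuclideanSpace.proj (𝕜 := ℝ) i)‖
      ≤ ‖lam i‖ * 1 := by
        apply mul_le_mul_of_nonneg_left _ (norm_nonneg _)
        apply ContinuousLinearMap.opNorm_le_bound _ zero_le_one
        intro v
        simp only [ContinuousLinearMap.coe_comp', Function.comp_apply, one_mul]
        rw [show ‖(Complex.ofRealCLM) (EuclideanSpace.proj (𝕜 := ℝ) i v)‖ = |v i| by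
          simp [Complex.norm_real]]
        exact coord_le_norm v i
    _ = ‖lam i‖ := mul_one _

lemma hasFDerivAt_cexp_phase (lam : EuclideanSpace ℂ (Fin d)) (v : EuclideanSpace ℝ (Fin d)) :
    HasFDerivAt (fun v : EuclideanSpace ℝ (Fin d) => Complex.exp (∑ i, lam i * (v i : ℂ)))
      (Complex.exp (∑ i, lam i * (v i : ℂ)) • Mlam d lam) v := by
  have : (fun v : EuclideanSpace ℝ (Fin d) => Complex.exp (∑ i, lam i * (v i : ℂ)))
      = fun v => Complex.exp (Mlam d lam v) := by
    funext u; rw [Mlam_apply]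
  rw [this, show Complex.exp (∑ i, lam i * (v i : ℂ)) = Complex.exp (Mlam d lam v) by
    rw [Mlam_apply]]
  exact (Mlam d lam).hasFDerivAt.cexp

lemma top_add_one : ((⊤:ℕ∞) : WithTop ℕ∞) + 1 ≤ ((⊤:ℕ∞) : WithTop ℕ∞) := by simp
lemma one_le_top' : (1 : WithTop ℕ∞) ≤ ((⊤:ℕ∞) : WithTop ℕ∞) := by simp

lemma contDiff_cexp_phase (lam : EuclideanSpace ℂ (Fin d)) :
    ContDiff ℝ (⊤ : ℕ∞) (fun v : EuclideanSpace ℝ (Fin d) =>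
      Complex.exp (∑ i, lam i * (v i : ℂ))) := by
  have : (fun v : EuclideanSpace ℝ (Fin d) => Complex.exp (∑ i, lam i * (v i : ℂ)))
      = fun v => Complex.exp (Mlam d lam v) := by
    funext u; rw [Mlam_apply]
  rw [this]
  exact ((Complex.contDiff_exp (𝕜 := ℂ) (n := (⊤:ℕ∞))).restrict_scalars ℝ).comp (Mlam d lam).contDiff

lemma Decay.deriv {R : ℝ} {g : EuclideanSpace ℝ (Fin d) → ℂ} (hg : Decay d R g)
    (w : EuclideanSpace ℝ (Fin d)) (hw : ‖w‖ ≤ 1) :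
    Decay d R (fun v => fderiv ℝ g v w) := by
  constructor
  · exact (hg.1.fderiv_right (m := ((⊤:ℕ∞) : WithTop ℕ∞)) top_add_one).clm_apply contDiff_const
  · intro r hr hrR k
    obtain ⟨C, hC, hCb⟩ := hg.2 r hr hrR (k + 1)
    refine ⟨C, hC, fun v => ?_⟩
    calc ‖iteratedFDeriv ℝ k (fun v => fderiv ℝ g v w) v‖
        ≤ ‖w‖ * ‖iteratedFDeriv ℝ k (fderiv ℝ g) v‖ :=
          norm_iteratedFDeriv_clm_apply_const (hg.1.fderiv_right (m := ((⊤:ℕ∞) : WithTop ℕ∞)) top_add_one).contDiffAt (mod_cast le_top)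
      _ ≤ 1 * ‖iteratedFDeriv ℝ k (fderiv ℝ g) v‖ :=
          mul_le_mul_of_nonneg_right hw (norm_nonneg _)
      _ = ‖iteratedFDeriv ℝ (k + 1) g v‖ := by rw [one_mul, norm_iteratedFDeriv_fderiv]
      _ ≤ C * Real.exp (-r * ‖v‖) := hCb v

lemma ibp {R : ℝ} {g : EuclideanSpace ℝ (Fin d) → ℂ} (hg : Decay d R g) (hR : 0 < R)
    {lam : EuclideanSpace ℂ (Fin d)} (hlam : ‖reVec d lam‖ < R)
    (w : EuclideanSpace ℝ (Fin d)) :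
    ∫ v, fderiv ℝ g v w * Complex.exp (∑ i, lam i * (v i : ℂ))
      = -(Mlam d lam w) * ∫ v, g v * Complex.exp (∑ i, lam i * (v i : ℂ)) := by
  set a : ℝ := ‖reVec d lam‖ with ha
  set δ : ℝ := (R - a) / 2 with hδdef
  have hδ : 0 < δ := by simp only [hδdef]; linarith
  have har' : 0 < (a + R) / 2 := by positivity
  have har'' : (a + R) / 2 < R := by simp only [ha] at *; linarith
  -- the function h
  set h : EuclideanSpace ℝ (Fin d) → ℂ :=
    fun v => g v * Complex.exp (∑ i, lam i * (v i : ℂ)) with hh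
  have hsmooth : ContDiff ℝ (⊤ : ℕ∞) h := hg.1.mul (contDiff_cexp_phase lam)
  have hdiff : Differentiable ℝ h := hsmooth.differentiable (by simp)
  have hcont : Continuous (fderiv ℝ h) := (hsmooth.fderiv_right (m := ((⊤:ℕ∞) : WithTop ℕ∞)) top_add_one).continuous
  -- pointwise derivative formula
  have hder : ∀ v, fderiv ℝ h v =
      g v • (Complex.exp (∑ i, lam i * (v i : ℂ)) • Mlam d lam)
        + Complex.exp (∑ i, lam i * (v i : ℂ)) • fderiv ℝ g v := by
    intro v
    have h1 : HasFDerivAt g (fderiv ℝ g v) v := (hg.1.differentiable (by simp) v).hasFDerivAt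
    have h2 := hasFDerivAt_cexp_phase lam v
    exact (h1.mul h2).fderiv
  -- bounds
  obtain ⟨C₀, hC₀, hC₀b⟩ := integrand_bound hg hR (ha ▸ norm_nonneg (reVec d lam)) (ha ▸ hlam)
  have hC₀b' := hC₀b lam le_rfl
  obtain ⟨C₁, hC₁, hC₁b⟩ := hg.norm_fderiv_le har' har''
  have hexp_le : ∀ v : EuclideanSpace ℝ (Fin d),
      ‖Complex.exp (∑ i, lam i * (v i : ℂ))‖ ≤ Real.exp (a * ‖v‖) := fun v =>
    norm_exp_phase lam v
  have hfd1 : ∀ v, ‖fderiv ℝ g v‖ * ‖Complex.exp (∑ i, lam i * (v i : ℂ))‖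
      ≤ C₁ * Real.exp (-δ * ‖v‖) := by
    intro v
    calc ‖fderiv ℝ g v‖ * ‖Complex.exp (∑ i, lam i * (v i : ℂ))‖
        ≤ (C₁ * Real.exp (-((a+R)/2) * ‖v‖)) * Real.exp (a * ‖v‖) := by
          apply mul_le_mul (hC₁b v) (hexp_le v) (norm_nonneg _) (by positivity)
      _ = C₁ * Real.exp (-δ * ‖v‖) := by
          rw [mul_assoc, ← Real.exp_add]
          congr 2
          simp only [hδdef]; ring
  have hfd_bound : ∀ v, ‖fderiv ℝ h v‖ ≤ (C₀ * ‖Mlam d lam‖ + C₁) * Real.exp (-δ * ‖v‖) := by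
    intro v
    rw [hder v]
    refine (norm_add_le _ _).trans ?_
    have t1 : ‖g v • (Complex.exp (∑ i, lam i * (v i : ℂ)) • Mlam d lam)‖
        ≤ (C₀ * Real.exp (-δ * ‖v‖)) * ‖Mlam d lam‖ := by
      refine (norm_smul_le (g v) (Complex.exp (∑ i, lam i * (v i : ℂ)) • Mlam d lam)).trans ?_
      refine (mul_le_mul_of_nonneg_left
        (norm_smul_le (Complex.exp (∑ i, lam i * (v i : ℂ))) (Mlam d lam)) (norm_nonneg _)).trans ?_
      rw [← mul_assoc, ← norm_mul]
      apply mul_le_mul_of_nonneg_right _ (norm_nonneg _)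
      simpa [hδdef] using hC₀b' v
    have t2 : ‖Complex.exp (∑ i, lam i * (v i : ℂ)) • fderiv ℝ g v‖
        ≤ C₁ * Real.exp (-δ * ‖v‖) := by
      refine (norm_smul_le (Complex.exp (∑ i, lam i * (v i : ℂ))) (fderiv ℝ g v)).trans ?_
      rw [mul_comm]
      exact hfd1 v
    calc _ ≤ (C₀ * Real.exp (-δ * ‖v‖)) * ‖Mlam d lam‖ + C₁ * Real.exp (-δ * ‖v‖) :=
          add_le_add t1 t2
      _ = (C₀ * ‖Mlam d lam‖ + C₁) * Real.exp (-δ * ‖v‖) := by ring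
  set C : ℝ := C₀ + (C₀ * ‖Mlam d lam‖ + C₁) with hCdef
  have hbC : ∀ v, ‖h v‖ ≤ C * Real.exp (-δ * ‖v‖) := by
    intro v
    have := hC₀b' v
    have hnn : 0 ≤ (C₀ * ‖Mlam d lam‖ + C₁) * Real.exp (-δ * ‖v‖) := by positivity
    simp only [hδdef] at this ⊢
    simp only [hCdef]
    nlinarith [Real.exp_pos (-((R - a) / 2) * ‖v‖)]
  have hbC' : ∀ v, ‖fderiv ℝ h v‖ ≤ C * Real.exp (-δ * ‖v‖) := by
    intro v
    have := hfd_bound v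
    have hnn : 0 ≤ C₀ * Real.exp (-δ * ‖v‖) := by positivity
    simp only [hCdef]
    nlinarith [Real.exp_pos (-δ * ‖v‖)]
  have hzero := integral_dir_deriv_eq_zero hdiff hcont w hδ hbC hbC'
  -- rewrite the integrand
  have hptw : ∀ v, fderiv ℝ h v w =
      Mlam d lam w * (g v * Complex.exp (∑ i, lam i * (v i : ℂ)))
        + fderiv ℝ g v w * Complex.exp (∑ i, lam i * (v i : ℂ)) := by
    intro v
    rw [hder v]
    simp only [ContinuousLinearMap.add_apply, ContinuousLinearMap.coe_smul',
      Pi.smul_apply, smul_eq_mul]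
    ring
  have hcontg : Continuous (fun v => fderiv ℝ g v w) :=
    ((hg.1.fderiv_right (m := ((⊤:ℕ∞) : WithTop ℕ∞)) top_add_one).clm_apply
      contDiff_const).continuous
  have I1 : Integrable (fun v => Mlam d lam w *
      (g v * Complex.exp (∑ i, lam i * (v i : ℂ)))) :=
    (integrable_integrand hg hR hlam).const_mul _
  have I2 : Integrable (fun v => fderiv ℝ g v w * Complex.exp (∑ i, lam i * (v i : ℂ))) := by
    refine integrable_of_exp_decay
      ((hcontg.mul (continuous_cexp_phase lam)).aestronglyMeasurable) hδ
      (C := C₁ * ‖w‖) fun v => ?_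
    rw [norm_mul]
    calc ‖fderiv ℝ g v w‖ * ‖Complex.exp (∑ i, lam i * (v i : ℂ))‖
        ≤ (‖fderiv ℝ g v‖ * ‖w‖) * ‖Complex.exp (∑ i, lam i * (v i : ℂ))‖ := by
          apply mul_le_mul_of_nonneg_right (ContinuousLinearMap.le_opNorm _ _) (norm_nonneg _)
      _ = (‖fderiv ℝ g v‖ * ‖Complex.exp (∑ i, lam i * (v i : ℂ))‖) * ‖w‖ := by ring
      _ ≤ (C₁ * Real.exp (-δ * ‖v‖)) * ‖w‖ :=
          mul_le_mul_of_nonneg_right (hfd1 v) (norm_nonneg _)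
      _ = C₁ * ‖w‖ * Real.exp (-δ * ‖v‖) := by ring
  have hsplit : (∫ v, fderiv ℝ h v w) =
      (∫ v, Mlam d lam w * (g v * Complex.exp (∑ i, lam i * (v i : ℂ))))
        + ∫ v, fderiv ℝ g v w * Complex.exp (∑ i, lam i * (v i : ℂ)) := by
    rw [← integral_add I1 I2]
    congr 1
    funext v
    exact hptw v
  rw [hzero, integral_const_mul] at hsplit
  have h2 : ((Mlam d lam) w * ∫ v, g v * Complex.exp (∑ i, lam i * (v i : ℂ)))
      + (∫ v, fderiv ℝ g v w * Complex.exp (∑ i, lam i * (v i : ℂ))) = 0 := hsplit.symm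
  linear_combination h2

lemma norm_integral_le_aux {R : ℝ} {g : EuclideanSpace ℝ (Fin d) → ℂ} (hg : Decay d R g)
    (hR : 0 < R) {r : ℝ} (hr : 0 ≤ r) (hrR : r < R) :
    ∃ C : ℝ, ∀ lam : EuclideanSpace ℂ (Fin d), ‖reVec d lam‖ ≤ r →
      ‖∫ v, g v * Complex.exp (∑ i, lam i * (v i : ℂ))‖ ≤ C := by
  obtain ⟨C₀, hC₀, hC₀b⟩ := integrand_bound hg hR hr hrR
  have hδ : 0 < (R - r) / 2 := by linarith
  refine ⟨∫ v : EuclideanSpace ℝ (Fin d), C₀ * Real.exp (-((R - r)/2) * ‖v‖), fun lam hlam => ?_⟩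
  apply norm_integral_le_of_norm_le ((integrable_exp_decay hδ).const_mul C₀)
  filter_upwards with v
  exact hC₀b lam hlam v

lemma decay_polybound {R : ℝ} (hR : 0 < R) :
    ∀ N : ℕ, ∀ g : EuclideanSpace ℝ (Fin d) → ℂ, Decay d R g →
    ∀ r : ℝ, 0 < r → r < R → ∃ C : ℝ,
      ∀ lam : EuclideanSpace ℂ (Fin d), ‖reVec d lam‖ ≤ r →
        (1 + ‖lam‖) ^ N * ‖∫ v, g v * Complex.exp (∑ i, lam i * (v i : ℂ))‖ ≤ C := by
  intro N
  induction N with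
  | zero =>
    intro g hg r hr hrR
    obtain ⟨C, hC⟩ := norm_integral_le_aux hg hR hr.le hrR
    exact ⟨C, fun lam hlam => by simpa using hC lam hlam⟩
  | succ N ih =>
    intro g hg r hr hrR
    obtain ⟨C₀, hC₀⟩ := ih g hg r hr hrR
    have hgi : ∀ i : Fin d, Decay d R (fun v => fderiv ℝ g v (EuclideanSpace.single i (1:ℝ))) :=
      fun i => hg.deriv _ (by rw [EuclideanSpace.norm_single]; simp)
    have hCi : ∀ i : Fin d, ∃ C : ℝ, ∀ lam : EuclideanSpace ℂ (Fin d), ‖reVec d lam‖ ≤ r →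
        (1 + ‖lam‖) ^ N * ‖∫ v, fderiv ℝ g v (EuclideanSpace.single i (1:ℝ)) *
          Complex.exp (∑ j, lam j * (v j : ℂ))‖ ≤ C :=
      fun i => ih _ (hgi i) r hr hrR
    choose Ci hCib using hCi
    refine ⟨C₀ + ∑ i, Ci i, fun lam hlam => ?_⟩
    set F : ℂ := ∫ v, g v * Complex.exp (∑ i, lam i * (v i : ℂ)) with hF
    have hMe : ∀ i : Fin d, Mlam d lam (EuclideanSpace.single i (1:ℝ)) = lam i := by
      intro i
      rw [Mlam_apply]
      rw [Finset.sum_eq_single i]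
      · simp
      · intro j _ hj
        rw [EuclideanSpace.single_apply]
        simp [hj]
      · simp
    have hkey : ∀ i : Fin d, ‖lam i‖ * ‖F‖ =
        ‖∫ v, fderiv ℝ g v (EuclideanSpace.single i (1:ℝ)) *
          Complex.exp (∑ j, lam j * (v j : ℂ))‖ := by
      intro i
      rw [ibp hg hR (lt_of_le_of_lt hlam hrR) (EuclideanSpace.single i (1:ℝ)), hMe i]
      rw [norm_mul, norm_neg]
    have hnn : 0 ≤ (1 + ‖lam‖) ^ N * ‖F‖ := by positivity
    have h1 : (1 + ‖lam‖) ^ (N + 1) * ‖F‖ = (1 + ‖lam‖) * ((1 + ‖lam‖) ^ N * ‖F‖) := by ring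
    have h2 : (1 + ‖lam‖) ≤ 1 + ∑ i, ‖lam i‖ := by
      have := norm_le_sum_norm lam
      linarith
    calc (1 + ‖lam‖) ^ (N + 1) * ‖F‖
        ≤ (1 + ∑ i, ‖lam i‖) * ((1 + ‖lam‖) ^ N * ‖F‖) := by
          rw [h1]; exact mul_le_mul_of_nonneg_right h2 hnn
      _ = (1 + ‖lam‖) ^ N * ‖F‖ + ∑ i, (1 + ‖lam‖) ^ N * (‖lam i‖ * ‖F‖) := by
          rw [add_mul, one_mul, Finset.sum_mul]
          congr 1
          refine Finset.sum_congr rfl fun i _ => by ring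
      _ ≤ C₀ + ∑ i, Ci i := by
          apply add_le_add (hC₀ lam hlam)
          apply Finset.sum_le_sum
          intro i _
          rw [hkey i]
          exact hCib i lam hlam

set_option synthInstance.maxHeartbeats 1000000

/-- Coordinate pairing `μ ↦ ∑ i, v i * μ i` as a continuous `ℂ`-linear map on `ℂ^d`. -/
noncomputable def Lv (d : ℕ) (v : EuclideanSpace ℝ (Fin d)) :
    EuclideanSpace ℂ (Fin d) →L[ℂ] ℂ :=
  ∑ i, ((v i : ℂ)) • (EuclideanSpace.proj i : EuclideanSpace ℂ (Fin d) →L[ℂ] ℂ)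

lemma Lv_apply (v : EuclideanSpace ℝ (Fin d)) (mu : EuclideanSpace ℂ (Fin d)) :
    Lv d v mu = ∑ i, (v i : ℂ) * mu i := by
  simp [Lv]

lemma norm_Lv_le (v : EuclideanSpace ℝ (Fin d)) : ‖Lv d v‖ ≤ d * ‖v‖ := by
  refine (norm_sum_le _ _).trans ?_
  have : ∀ i : Fin d, ‖((v i : ℂ)) • (EuclideanSpace.proj i : EuclideanSpace ℂ (Fin d) →L[ℂ] ℂ)‖ ≤ ‖v‖ := by
    intro i
    refine (norm_smul_le ((v i : ℂ)) ((EuclideanSpace.proj i : EuclideanSpace ℂ (Fin d) →L[ℂ] ℂ))).trans ?_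
    calc ‖(v i : ℂ)‖ * ‖(EuclideanSpace.proj i : EuclideanSpace ℂ (Fin d) →L[ℂ] ℂ)‖
        ≤ ‖(v i : ℂ)‖ * 1 := by
          apply mul_le_mul_of_nonneg_left _ (norm_nonneg _)
          apply ContinuousLinearMap.opNorm_le_bound _ zero_le_one
          intro mu
          rw [one_mul]
          exact coord_le_norm' mu i
      _ = |v i| := by rw [mul_one, Complex.norm_real, Real.norm_eq_abs]
      _ ≤ ‖v‖ := coord_le_norm v i
  refine (Finset.sum_le_sum fun i _ => this i).trans ?_
  simp [Finset.sum_const]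

lemma hasFDerivAt_integrand_lam {g : EuclideanSpace ℝ (Fin d) → ℂ}
    (v : EuclideanSpace ℝ (Fin d)) (lam : EuclideanSpace ℂ (Fin d)) :
    HasFDerivAt (fun lam : EuclideanSpace ℂ (Fin d) =>
        g v * Complex.exp (∑ i, lam i * (v i : ℂ)))
      ((g v * Complex.exp (∑ i, lam i * (v i : ℂ))) • Lv d v) lam := by
  have h1 : HasFDerivAt (fun lam : EuclideanSpace ℂ (Fin d) => ∑ i, lam i * (v i : ℂ))
      (Lv d v) lam := by
    have heq : (fun lam : EuclideanSpace ℂ (Fin d) => ∑ i, lam i * (v i : ℂ))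
        = fun lam => Lv d v lam := by
      funext mu
      rw [Lv_apply]
      exact Finset.sum_congr rfl fun i _ => mul_comm _ _
    rw [heq]
    exact (Lv d v).hasFDerivAt
  have h2 := h1.cexp
  have h3 := h2.const_mul (g v)
  rwa [smul_smul] at h3

open Metric in
lemma differentiableAt_transform {R : ℝ} {g : EuclideanSpace ℝ (Fin d) → ℂ}
    (hg : Decay d R g) (hR : 0 < R) {lam₀ : EuclideanSpace ℂ (Fin d)}
    (h₀ : ‖reVec d lam₀‖ < R) :
    DifferentiableAt ℂ (fun lam : EuclideanSpace ℂ (Fin d) =>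
      ∫ v, g v * Complex.exp (∑ i, lam i * (v i : ℂ))) lam₀ := by
  set a₀ : ℝ := ‖reVec d lam₀‖ with ha₀
  set δ : ℝ := (R - a₀) / 4 with hδdef
  have hδ : 0 < δ := by simp only [hδdef]; linarith
  have ha₀nn : 0 ≤ a₀ := ha₀ ▸ norm_nonneg _
  have hrlt : a₀ + δ < R := by simp only [hδdef]; linarith
  obtain ⟨C₁, hC₁, hC₁b⟩ := integrand_bound hg hR (by positivity : (0:ℝ) ≤ a₀ + δ) hrlt
  set β : ℝ := (R - (a₀ + δ)) / 2 with hβdef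
  have hβ : 0 < β := by simp only [hβdef]; linarith
  obtain ⟨C₂, hC₂, hC₂b⟩ := poly_exp_bound 1 (half_pos hβ)
  -- the domination
  have hball : ∀ lam ∈ ball lam₀ δ, ‖reVec d lam‖ ≤ a₀ + δ := by
    intro lam hlam
    have h2 : ‖reVec d lam - reVec d lam₀‖ ≤ ‖lam - lam₀‖ := by
      rw [← reVec_sub]; exact norm_reVec_le _
    have h3 : ‖lam - lam₀‖ < δ := mem_ball_iff_norm.1 hlam
    have h4 := norm_sub_norm_le (reVec d lam) (reVec d lam₀)
    simp only [ha₀]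
    linarith
  have hLvcont : Continuous (fun v : EuclideanSpace ℝ (Fin d) => Lv d v) := by
    apply continuous_finset_sum
    intro i _
    exact (Complex.continuous_ofReal.comp
      (EuclideanSpace.proj (𝕜 := ℝ) i).continuous).smul continuous_const
  have hF'meas : AEStronglyMeasurable (fun v : EuclideanSpace ℝ (Fin d) =>
      (g v * Complex.exp (∑ i, lam₀ i * (v i : ℂ))) • Lv d v) volume :=
    ((hg.1.continuous.mul (continuous_cexp_phase lam₀)).smul hLvcont).aestronglyMeasurable
  have h_bound : ∀ᵐ v : EuclideanSpace ℝ (Fin d), ∀ lam ∈ ball lam₀ δ,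
      ‖(g v * Complex.exp (∑ i, lam i * (v i : ℂ))) • Lv d v‖ ≤
        (C₁ * d * C₂) * Real.exp (-(β/2) * ‖v‖) := by
    filter_upwards with v
    intro lam hlam
    have e1 : ‖(g v * Complex.exp (∑ i, lam i * (v i : ℂ))) • Lv d v‖ ≤
        (C₁ * Real.exp (-β * ‖v‖)) * (d * ‖v‖) := by
      refine (norm_smul_le (g v * Complex.exp (∑ i, lam i * (v i : ℂ))) (Lv d v)).trans ?_
      apply mul_le_mul _ (norm_Lv_le v) (norm_nonneg _) (by positivity)
      simpa [hβdef] using hC₁b lam (hball lam hlam) v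
    have e2 : (d : ℝ) * ‖v‖ ≤ d * (1 + ‖v‖) := by
      have : ‖v‖ ≤ 1 + ‖v‖ := by linarith [norm_nonneg v]
      exact mul_le_mul_of_nonneg_left this (Nat.cast_nonneg d)
    have e3 : (1 + ‖v‖) * Real.exp (-β * ‖v‖) ≤ C₂ * Real.exp (-(β/2) * ‖v‖) := by
      have h4 := hC₂b ‖v‖ (norm_nonneg v)
      rw [pow_one] at h4
      have : Real.exp (-β * ‖v‖) = Real.exp (-(β/2) * ‖v‖) * Real.exp (-(β/2) * ‖v‖) := by
        rw [← Real.exp_add]; ring_nf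
      rw [this, ← mul_assoc]
      apply mul_le_mul_of_nonneg_right _ (Real.exp_nonneg _)
      exact h4
    calc ‖(g v * Complex.exp (∑ i, lam i * (v i : ℂ))) • Lv d v‖
        ≤ (C₁ * Real.exp (-β * ‖v‖)) * (d * ‖v‖) := e1
      _ ≤ (C₁ * Real.exp (-β * ‖v‖)) * (d * (1 + ‖v‖)) := by
          apply mul_le_mul_of_nonneg_left e2 (by positivity)
      _ = (C₁ * d) * ((1 + ‖v‖) * Real.exp (-β * ‖v‖)) := by ring
      _ ≤ (C₁ * d) * (C₂ * Real.exp (-(β/2) * ‖v‖)) := by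
          apply mul_le_mul_of_nonneg_left e3 (by positivity)
      _ = (C₁ * d * C₂) * Real.exp (-(β/2) * ‖v‖) := by ring
  have hder := hasFDerivAt_integral_of_dominated_of_fderiv_le (𝕜 := ℂ)
    (F := fun lam (v : EuclideanSpace ℝ (Fin d)) =>
      g v * Complex.exp (∑ i, lam i * (v i : ℂ)))
    (F' := fun lam (v : EuclideanSpace ℝ (Fin d)) =>
      (g v * Complex.exp (∑ i, lam i * (v i : ℂ))) • Lv d v)
    (x₀ := lam₀) (bound := fun v => (C₁ * d * C₂) * Real.exp (-(β/2) * ‖v‖)) (ball_mem_nhds _ hδ)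
    (Filter.Eventually.of_forall fun lam =>
      (hg.1.continuous.mul (continuous_cexp_phase lam)).aestronglyMeasurable)
    (integrable_integrand hg hR h₀) hF'meas h_bound
    ((integrable_exp_decay (by positivity : (0:ℝ) < β/2)).const_mul _)
    (Filter.Eventually.of_forall fun v => fun lam _ => hasFDerivAt_integrand_lam v lam)
  exact hder.differentiableAt

/-- If `f : ℝ^d → ℂ` is smooth with all derivatives decaying like `exp (-r‖v‖)` for every
`r < R`, then the Laplace/Fourier transform `F(λ) = ∫ f(v) exp⟨λ, v⟩ dv`
(a) is defined (the integrand is integrable) for `‖Re λ‖ < R`,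
(b) is holomorphic on the tube `{λ : ‖Re λ‖ < R}`, and
(c) decays faster than any inverse polynomial, uniformly on `{λ : ‖Re λ‖ ≤ r}`, `r < R`. -/
theorem fourierLaplace_of_exp_decay
    (d : ℕ) (R : ℝ) (hR : 0 < R) (f : EuclideanSpace ℝ (Fin d) → ℂ)
    (hf : ContDiff ℝ (⊤ : ℕ∞) f)
    (hbound : ∀ r : ℝ, 0 < r → r < R → ∀ k : ℕ, ∃ C > 0,
      ∀ v : EuclideanSpace ℝ (Fin d),
        ‖iteratedFDeriv ℝ k f v‖ ≤ C * Real.exp (-r * ‖v‖)) :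
    (∀ lam : EuclideanSpace ℂ (Fin d), ‖reVec d lam‖ < R →
        Integrable (fun v : EuclideanSpace ℝ (Fin d) =>
          f v * Complex.exp (∑ i, lam i * (v i : ℂ)))) ∧
    DifferentiableOn ℂ
      (fun lam : EuclideanSpace ℂ (Fin d) =>
        ∫ v : EuclideanSpace ℝ (Fin d), f v * Complex.exp (∑ i, lam i * (v i : ℂ)))
      {lam : EuclideanSpace ℂ (Fin d) | ‖reVec d lam‖ < R} ∧
    (∀ r : ℝ, 0 < r → r < R → ∀ N : ℕ, ∃ C : ℝ,
      ∀ lam : EuclideanSpace ℂ (Fin d), ‖reVec d lam‖ ≤ r →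
        ‖∫ v : EuclideanSpace ℝ (Fin d), f v * Complex.exp (∑ i, lam i * (v i : ℂ))‖ *
          (1 + ‖lam‖) ^ N ≤ C) := by
  have hD : Decay d R f := ⟨hf, hbound⟩
  refine ⟨fun lam hlam => integrable_integrand hD hR hlam, ?_, ?_⟩
  · intro lam hlam
    exact (differentiableAt_transform hD hR hlam).differentiableWithinAt
  · intro r hr hrR N
    obtain ⟨C, hC⟩ := decay_polybound hR N f hD r hr hrR
    exact ⟨C, fun lam hlam => by rw [mul_comm]; exact hC lam hlam⟩
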